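/- Let G₁ = T_P(G) and G₂ = T_{P'}(G) be the centroids of the cevian triangles DEF and D₃E₃F₃ of P and P'. Then G is the midpoint of the segment G₁G₂, i.e. G = (G₁+G₂)/2, and the vector G₂ − G₁ is a scalar multiple of P' − P (the segment G₁G₂ is parallel to PP'). -/

import Mathlib

noncomputable section

abbrev Pt := EuclideanSpace ℝ (Fin 2)

set_option maxHeartbeats 1000000 in
theorem stmt6
    (A B C : Pt) (hABC : AffineIndependent ℝ ![A, B, C])
    (α β γ : ℝ) (hsum : α + β + γ = 1)
    (hα : α ≠ 0) (hβ : β ≠ 0) (hγ : γ ≠ 0)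
    (hβγ : β + γ ≠ 0) (hγα : γ + α ≠ 0) (hαβ : α + β ≠ 0)
    (hs : α * β + β * γ + γ * α ≠ 0)
    (G : Pt) (hG : G = (3:ℝ)⁻¹ • (A + B + C))
    (P : Pt) (hP : P = α • A + β • B + γ • C)
    (P' : Pt)
    (hP'' : P' = (α * β + β * γ + γ * α)⁻¹ • ((β * γ) • A + (γ * α) • B + (α * β) • C))
    (D E F : Pt)
    (hD : D = (β + γ)⁻¹ • (β • B + γ • C))
    (hE : E = (γ + α)⁻¹ • (α • A + γ • C))
    (hF : F = (α + β)⁻¹ • (α • A + β • B))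
    (D₃ E₃ F₃ : Pt)
    (hD₃ : D₃ = (β + γ)⁻¹ • (γ • B + β • C))
    (hE₃ : E₃ = (γ + α)⁻¹ • (γ • A + α • C))
    (hF₃ : F₃ = (α + β)⁻¹ • (β • A + α • B))
    (TP : Pt →ᵃ[ℝ] Pt) (hTPA : TP A = D) (hTPB : TP B = E) (hTPC : TP C = F)
    (TP' : Pt →ᵃ[ℝ] Pt) (hTP'A : TP' A = D₃) (hTP'B : TP' B = E₃) (hTP'C : TP' C = F₃)
    :
    G = midpoint ℝ (TP G) (TP' G) ∧ ∃ k : ℝ, TP' G - TP G = k • (P' - P) := by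
  have key : ∀ (f : Pt →ᵃ[ℝ] Pt),
      f G = f A + (3:ℝ)⁻¹ • (f B - f A) + (3:ℝ)⁻¹ • (f C - f A) := by
    intro f
    have hGA : G -ᵥ A = (3:ℝ)⁻¹ • (B -ᵥ A) + (3:ℝ)⁻¹ • (C -ᵥ A) := by
      simp only [vsub_eq_sub, hG]; module
    have h1 : f G -ᵥ f A = (3:ℝ)⁻¹ • (f B -ᵥ f A) + (3:ℝ)⁻¹ • (f C -ᵥ f A) := by
      rw [← f.linearMap_vsub G A, hGA, map_add, f.linear.map_smul, f.linear.map_smul,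
        f.linearMap_vsub, f.linearMap_vsub]
    simp only [vsub_eq_sub] at h1
    have := sub_eq_iff_eq_add.mp h1
    rw [this]; abel
  have hTPG : TP G = (3:ℝ)⁻¹ • (D + E + F) := by
    rw [key TP, hTPA, hTPB, hTPC]; module
  have hTP'G : TP' G = (3:ℝ)⁻¹ • (D₃ + E₃ + F₃) := by
    rw [key TP', hTP'A, hTP'B, hTP'C]; module
  have hγ' : γ = 1 - α - β := by linarith
  subst hγ' hG hP hP'' hD hE hF hD₃ hE₃ hF₃
  have h1a : (1:ℝ) - α ≠ 0 := by intro h; exact hβγ (by linarith)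
  have h1b : (1:ℝ) - β ≠ 0 := by intro h; exact hγα (by linarith)
  constructor
  · rw [hTPG, hTP'G, midpoint_eq_smul_add]
    simp only [invOf_eq_inv]
    match_scalars <;> field_simp <;> ring
  · refine ⟨2 * (α * β + β * (1 - α - β) + (1 - α - β) * α) /
      (3 * ((α + β) * (β + (1 - α - β)) * ((1 - α - β) + α))), ?_⟩
    rw [hTPG, hTP'G]
    have hs3 : β * (α + (1 - α - β)) + α * (1 - α - β) ≠ 0 := by convert hs using 1; ring
    match_scalars <;> field_simp <;> ring
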